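/- If θ ∈ [0, π] satisfies cos(θ) = (√2 - 2)/2, then θ/π is irrational. -/

import Mathlib

open Polynomial Polynomial.Chebyshev Real

private lemma T_rec (x : ℝ) (k : ℕ) :
    (T ℝ ((k : ℤ) + 2)).eval x = 2 * x * (T ℝ ((k : ℤ) + 1)).eval x - (T ℝ (k : ℤ)).eval x := by
  have e1 := congrArg (Polynomial.eval x) (T_add_two ℝ (k : ℤ))
  simpa using e1

private lemma T_eval_neg (x : ℝ) : ∀ n : ℕ,
    (T ℝ n).eval (-x) = (-1) ^ n * (T ℝ n).eval x ∧
    (T ℝ ((n : ℤ) + 1)).eval (-x) = (-1) ^ (n + 1) * (T ℝ ((n : ℤ) + 1)).eval x := by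
  intro n
  induction n with
  | zero => simp [T_zero, T_one]
  | succ k ih =>
    have ih2 := ih.2
    constructor
    · rw [show ((k + 1 : ℕ) : ℤ) = (k : ℤ) + 1 by push_cast; ring]
      exact ih2
    · rw [show ((k + 1 : ℕ) : ℤ) + 1 = (k : ℤ) + 2 by push_cast; ring]
      rw [T_rec x k, T_rec (-x) k, ih.1, ih2]
      ring

private lemma T_eval_ge (x : ℝ) (hx : 1 ≤ x) : ∀ n : ℕ,
    1 ≤ (T ℝ n).eval x ∧ (T ℝ n).eval x ≤ (T ℝ ((n : ℤ) + 1)).eval x := by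
  intro n
  induction n with
  | zero => simp [T_zero, T_one]; exact hx
  | succ k ih =>
    have ih1 := ih.1
    have ih2 := ih.2
    have hkey : (1 : ℝ) ≤ (T ℝ ((k : ℤ) + 1)).eval x := le_trans ih1 ih2
    constructor
    · rw [show ((k + 1 : ℕ) : ℤ) = (k : ℤ) + 1 by push_cast; ring]
      exact hkey
    · rw [show ((k + 1 : ℕ) : ℤ) + 1 = (k : ℤ) + 2 by push_cast; ring,
        show ((k + 1 : ℕ) : ℤ) = (k : ℤ) + 1 by push_cast; ring]
      rw [T_rec x k]
      have h3 : 0 ≤ (2 * x - 2) * (T ℝ ((k : ℤ) + 1)).eval x :=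
        mul_nonneg (by linarith) (by linarith)
      linarith

private lemma T_eval_ge_x (x : ℝ) (hx : 1 ≤ x) : ∀ n : ℕ, x ≤ (T ℝ ((n : ℤ) + 1)).eval x := by
  intro n
  induction n with
  | zero => simp [T_one]
  | succ k ih =>
    rw [show ((k + 1 : ℕ) : ℤ) + 1 = ((k + 1 : ℕ) : ℤ) + 1 from rfl]
    have := (T_eval_ge x hx (k + 1)).2
    refine le_trans ?_ this
    rw [show ((k + 1 : ℕ) : ℤ) = (k : ℤ) + 1 by push_cast; ring]
    exact ih

private lemma key : ∀ n : ℕ, (∃ a b : ℚ,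
    (T ℝ n).eval ((Real.sqrt 2 - 2) / 2) = a + b * Real.sqrt 2 ∧
      (T ℝ n).eval ((-Real.sqrt 2 - 2) / 2) = a - b * Real.sqrt 2) ∧
    (∃ a' b' : ℚ,
      (T ℝ ((n : ℤ) + 1)).eval ((Real.sqrt 2 - 2) / 2) = a' + b' * Real.sqrt 2 ∧
      (T ℝ ((n : ℤ) + 1)).eval ((-Real.sqrt 2 - 2) / 2) = a' - b' * Real.sqrt 2) := by
  have h2 : Real.sqrt 2 * Real.sqrt 2 = 2 := Real.mul_self_sqrt (by norm_num)
  intro n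
  induction n with
  | zero =>
    refine ⟨⟨1, 0, by simp [T_zero], by simp [T_zero]⟩, -1, 1/2, ?_, ?_⟩ <;>
      · norm_num [T_one]
        push_cast
        ring
  | succ k ih =>
    obtain ⟨⟨a, b, hab1, hab2⟩, a', b', h1', h2'⟩ := ih
    have hc : ((k + 1 : ℕ) : ℤ) = (k : ℤ) + 1 := by push_cast; ring
    refine ⟨⟨a', b', by rw [hc]; exact h1', by rw [hc]; exact h2'⟩,
      2 * b' - 2 * a' - a, a' - 2 * b' - b, ?_, ?_⟩ <;>
      rw [hc, show (k : ℤ) + 1 + 1 = (k : ℤ) + 2 by ring, T_rec]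
    · rw [hab1, h1']; push_cast; linear_combination (b' : ℝ) * h2
    · rw [hab2, h2']; push_cast; linear_combination (b' : ℝ) * h2

theorem theta_sqrt2_irrational (θ : ℝ) (h0 : 0 ≤ θ) (h1 : θ ≤ Real.pi)
    (hθ : Real.cos θ = (Real.sqrt 2 - 2) / 2) :
    Irrational (θ / Real.pi) := by
  by_contra h
  obtain ⟨q, hq⟩ := not_not.mp h
  have hπ : (Real.pi : ℝ) ≠ 0 := Real.pi_ne_zero
  have hθeq : θ = (q : ℝ) * Real.pi := by
    field_simp at hq; linarith [hq]
  set n : ℕ := q.den with hn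
  have hnpos : 0 < n := q.pos
  have hmul : (n : ℝ) * θ = (q.num : ℝ) * Real.pi := by
    rw [hθeq]
    have hd : ((q.den : ℝ)) ≠ 0 := Nat.cast_ne_zero.mpr q.den_nz
    have hcast : (q : ℝ) = (q.num : ℝ) / (q.den : ℝ) := by rw [Rat.cast_def]
    have : ((n : ℝ)) * (q : ℝ) = (q.num : ℝ) := by
      rw [hn, hcast]; field_simp
    rw [← mul_assoc, this]
  have hT := Polynomial.Chebyshev.T_real_cos θ (n : ℤ)
  rw [hθ] at hT
  have habs : |(T ℝ (n : ℤ)).eval ((Real.sqrt 2 - 2) / 2)| = 1 := by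
    rw [hT]
    have : ((n : ℤ) : ℝ) * θ = (q.num : ℝ) * Real.pi := by push_cast; exact hmul
    rw [this]
    exact Real.abs_cos_int_mul_pi q.num
  obtain ⟨⟨a, b, hab1, hab2⟩, -⟩ := key n
  have hb : b = 0 := by
    by_contra hb0
    have hirr : Irrational ((a : ℝ) + b * Real.sqrt 2) :=
      (irrational_sqrt_two.ratCast_mul hb0).ratCast_add a
    rw [← hab1] at hirr
    rcases (abs_eq (by norm_num : (0:ℝ) ≤ 1)).mp habs with h' | h'
    · rw [h'] at hirr; exact hirr ⟨1, by norm_num⟩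
    · rw [h'] at hirr; exact hirr ⟨-1, by norm_num⟩
  have ha : |(a : ℝ)| = 1 := by
    rw [← habs, hab1, hb]; push_cast; ring_nf
  have hconj : (T ℝ (n : ℤ)).eval ((-Real.sqrt 2 - 2) / 2) = (a : ℝ) := by
    rw [hab2, hb]; push_cast; ring
  have hx : (1 : ℝ) < (Real.sqrt 2 + 2) / 2 := by
    nlinarith [Real.sqrt_nonneg 2, Real.sq_sqrt (by norm_num : (0:ℝ) ≤ 2)]
  have hneg : ((-Real.sqrt 2 - 2) / 2 : ℝ) = -((Real.sqrt 2 + 2) / 2) := by ring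
  obtain ⟨m, hm⟩ : ∃ m : ℕ, n = m + 1 := ⟨n - 1, by omega⟩
  have hge : (Real.sqrt 2 + 2) / 2 ≤ (T ℝ (n : ℤ)).eval ((Real.sqrt 2 + 2) / 2) := by
    have := T_eval_ge_x ((Real.sqrt 2 + 2) / 2) (le_of_lt hx) m
    rw [hm, show ((m + 1 : ℕ) : ℤ) = (m : ℤ) + 1 by push_cast; ring]
    exact this
  have hnegval := (T_eval_neg ((Real.sqrt 2 + 2) / 2) n).1
  rw [← hneg] at hnegval
  have hfin : |(T ℝ (n : ℤ)).eval ((-Real.sqrt 2 - 2) / 2)|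
      = (T ℝ (n : ℤ)).eval ((Real.sqrt 2 + 2) / 2) := by
    have hpos : (0:ℝ) < (T ℝ (n : ℤ)).eval ((Real.sqrt 2 + 2) / 2) := by linarith
    rw [hnegval, abs_mul, abs_pow, abs_neg, abs_one, one_pow, one_mul, abs_of_pos hpos]
  rw [hconj, ha] at hfin
  linarith [lt_of_lt_of_le hx hge]
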